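/- Let D = ℕ ∪ {∞} and let f : D → D be defined by f(x) = 1 if x = 0 and f(x) = 0 otherwise (a non-monotone function). With the widening a ▽ b = ∞ whenever a < b (and a ▽ b = a if b ≤ a), the narrowing a △ b = b if a = ∞ and a △ b = a otherwise, and the combined operator ⊟ (narrowing when the new value is ≤, widening otherwise), the iteration x₀ = 0, x_{i+1} = x_i ⊟ f(x_i) satisfies x_{2k} = 0 and x_{2k+1} = ∞ for all k, and hence never becomes stationary. -/
import Mathlib


open Classical

/-- The non-monotone right-hand side: f(x) = 1 if x = 0, else 0. -/
noncomputable def f4 (x : ℕ∞) : ℕ∞ := if x = 0 then 1 else 0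
/-- Widening: a ▽ b = ∞ if a < b, else a. -/
noncomputable def w4 (a b : ℕ∞) : ℕ∞ := if a < b then ⊤ else a
/-- Narrowing: a △ b = b if a = ∞, else a. -/
noncomputable def n4 (a b : ℕ∞) : ℕ∞ := if a = ⊤ then b else a
/-- Combined operator. -/
noncomputable def box4 (a b : ℕ∞) : ℕ∞ := if b ≤ a then n4 a b else w4 a b

/-- The iteration x₀ = 0, x_{i+1} = x_i ⊟ f(x_i). -/
noncomputable def x4 : ℕ → ℕ∞
  | 0 => 0
  | i+1 => box4 (x4 i) (f4 (x4 i))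

lemma step0 : box4 0 (f4 0) = ⊤ := by
  simp [box4, f4, w4, n4]

lemma stepT : box4 ⊤ (f4 ⊤) = 0 := by
  simp [box4, f4, w4, n4]

lemma key : ∀ k, x4 (2*k) = 0 ∧ x4 (2*k+1) = ⊤ := by
  intro k
  induction k with
  | zero => exact ⟨rfl, by simp [x4, step0]⟩
  | succ n ih =>
    have h1 : x4 (2*(n+1)) = 0 := by
      have : 2*(n+1) = (2*n+1)+1 := by ring
      rw [this, show x4 ((2*n+1)+1) = box4 (x4 (2*n+1)) (f4 (x4 (2*n+1))) from rfl, ih.2, stepT]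
    exact ⟨h1, by rw [show x4 (2*(n+1)+1) = box4 (x4 (2*(n+1))) (f4 (x4 (2*(n+1)))) from rfl, h1, step0]⟩

theorem stmt4 : (∀ k, x4 (2*k) = 0 ∧ x4 (2*k+1) = ⊤) ∧ (∀ i, x4 (i+1) ≠ x4 i) := by
  refine ⟨key, fun i => ?_⟩
  rcases Nat.even_or_odd i with ⟨k, hk⟩ | ⟨k, hk⟩
  · have := key k
    rw [hk, show k+k = 2*k by ring]
    simp [this.1, this.2]
  · have h1 := key k
    have h2 := key (k+1)
    rw [hk, show 2*k+1+1 = 2*(k+1) by ring]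
    simp [h1.2, h2.1]
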